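/- arXiv:2412.18823 — 4 statements merged into one kernel-verified Lean document; each statement's English description precedes it below -/
import Mathlib

section
/- Let A = {t₀ + Σ_{t∈S} t : S ⊆ T} for T = {t₁,...,t_m} ⊆ ℤ_p, and suppose B = {2t₀ + Σ γ_i t_i : γ_i ∈ {0,1,2}} is a proper GAP. If n = 2t₀ + Σ γ_i t_i with γ_i ∈ {0,1,2}, then the number of pairs (a,b) ∈ A × A with a + b = n equals 2^{|{i : γ_i = 1}|}. -/
open Finset

/-- With `A = {t₀ + Σ_{t∈S} t : S ⊆ T}` and `B` a proper GAP, if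
`n = 2t₀ + Σ γᵢ tᵢ` with `γᵢ ∈ {0,1,2}` then the number of pairs `(a,b) ∈ A × A`
with `a + b = n` equals `2^{|{i : γᵢ = 1}|}`. -/
theorem stmt1 (p m : ℕ) [Fact p.Prime] (t₀ : ZMod p) (t : Fin m → ZMod p)
    (hB : Function.Injective
      (fun γ : Fin m → Fin 3 => 2 * t₀ + ∑ i, ((γ i : ℕ) : ZMod p) * t i))
    (A : Finset (ZMod p))
    (hA : A = (Finset.univ : Finset (Finset (Fin m))).image (fun S => t₀ + ∑ i ∈ S, t i))
    (γ : Fin m → Fin 3) (n : ZMod p)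
    (hn : n = 2 * t₀ + ∑ i, ((γ i : ℕ) : ZMod p) * t i) :
    ((A ×ˢ A).filter (fun ab => ab.1 + ab.2 = n)).card
      = 2 ^ ((Finset.univ.filter (fun i => γ i = 1)).card) := by
  classical
  set F : (Fin m → Fin 3) → ZMod p :=
    fun δ => 2 * t₀ + ∑ i, ((δ i : ℕ) : ZMod p) * t i with hF
  set f : Finset (Fin m) → ZMod p := fun S => t₀ + ∑ i ∈ S, t i with hf
  have hsum : ∀ S : Finset (Fin m),
      ∑ i ∈ S, t i = ∑ i : Fin m, (if i ∈ S then (1 : ZMod p) else 0) * t i := by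
    intro S
    rw [show (∑ i : Fin m, (if i ∈ S then (1 : ZMod p) else 0) * t i)
        = ∑ i : Fin m, (if i ∈ S then t i else 0) by
      apply Finset.sum_congr rfl; intro i _; split_ifs <;> simp]
    rw [Finset.sum_ite_mem, Finset.univ_inter]
  have hfF : ∀ S S' : Finset (Fin m), f S + f S' =
      F (fun i => (⟨(if i ∈ S then 1 else 0) + (if i ∈ S' then 1 else 0),
        by split_ifs <;> omega⟩ : Fin 3)) := by
    intro S S'
    simp only [hF, hf, hsum, Fin.val_mk, Nat.cast_add, Nat.cast_ite, Nat.cast_one,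
      Nat.cast_zero, add_mul, Finset.sum_add_distrib]
    ring
  have hfinj : Function.Injective f := by
    intro S S' h
    have h2 : f S + f S = f S' + f S' := by rw [h]
    rw [hfF S S, hfF S' S'] at h2
    have h3 := hB h2
    ext i
    have hi := congrFun h3 i
    rw [Fin.ext_iff] at hi
    simp only [Fin.val_mk] at hi
    by_cases h1 : i ∈ S <;> by_cases h2' : i ∈ S' <;> simp [h1, h2'] at hi ⊢
  have hcond : ∀ S S' : Finset (Fin m), (f S + f S' = n) ↔
      ∀ i, (if i ∈ S then 1 else 0) + (if i ∈ S' then 1 else 0) = (γ i : ℕ) := by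
    intro S S'
    rw [hfF, hn, show (2 * t₀ + ∑ i, ((γ i : ℕ) : ZMod p) * t i) = F γ from rfl]
    constructor
    · intro h i
      have hi := congrFun (hB h) i
      rw [Fin.ext_iff] at hi
      simpa using hi
    · intro h
      exact congrArg F (funext fun i => by rw [Fin.ext_iff]; simpa using h i)
  set K : Finset (Fin m) := Finset.univ.filter (fun i => γ i = 1) with hK
  set F2 : Finset (Fin m) := Finset.univ.filter (fun i => γ i = 2) with hF2
  have h1 : ((A ×ˢ A).filter (fun ab => ab.1 + ab.2 = n)) =
      (((Finset.univ : Finset (Finset (Fin m))) ×ˢ Finset.univ).filter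
        (fun SS => f SS.1 + f SS.2 = n)).image (Prod.map f f) := by
    subst hA
    ext x
    obtain ⟨a, b⟩ := x
    simp only [Finset.mem_filter, Finset.mem_product, Finset.mem_image, Finset.mem_univ,
      true_and, Prod.map, Prod.ext_iff]
    constructor
    · rintro ⟨⟨⟨S, rfl⟩, ⟨S', rfl⟩⟩, hsum'⟩
      exact ⟨(S, S'), hsum', rfl, rfl⟩
    · rintro ⟨⟨S, S'⟩, hsum', h1, h2⟩
      exact ⟨⟨⟨(S, S').1, h1⟩, ⟨(S, S').2, h2⟩⟩, by rw [← h1, ← h2]; exact hsum'⟩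
  have h2 : (((Finset.univ : Finset (Finset (Fin m))) ×ˢ Finset.univ).filter
        (fun SS => f SS.1 + f SS.2 = n))
      = K.powerset.image (fun U => (U ∪ F2, (K \ U) ∪ F2)) := by
    ext SS
    obtain ⟨S, S'⟩ := SS
    simp only [Finset.mem_filter, Finset.mem_product, Finset.mem_univ, true_and,
      Finset.mem_image, Finset.mem_powerset, Prod.mk.injEq]
    rw [hcond]
    constructor
    · intro h
      refine ⟨S ∩ K, Finset.inter_subset_right, ?_, ?_⟩
      · ext i
        have hi := h i
        simp only [hK, hF2, Finset.mem_union, Finset.mem_inter, Finset.mem_filter,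
          Finset.mem_univ, true_and]
        by_cases hS : i ∈ S <;> by_cases hS' : i ∈ S' <;> simp [hS, hS'] at hi ⊢ <;> omega
      · ext i
        have hi := h i
        simp only [hK, hF2, Finset.mem_union, Finset.mem_sdiff, Finset.mem_inter,
          Finset.mem_filter, Finset.mem_univ, true_and]
        by_cases hS : i ∈ S <;> by_cases hS' : i ∈ S' <;> simp [hS, hS'] at hi ⊢ <;> omega
    · rintro ⟨U, hU, rfl, rfl⟩ i
      have hγ1 : i ∈ U → γ i = 1 := fun hi => by
        have := hU hi; simp [hK] at this; exact this
      simp only [hK, hF2, Finset.mem_union, Finset.mem_sdiff, Finset.mem_filter,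
        Finset.mem_univ, true_and]
      by_cases hiU : i ∈ U
      · have h1' := hγ1 hiU
        simp only [hiU, true_or, if_true, not_true_eq_false, and_false, false_or]
        split_ifs <;> omega
      · simp only [hiU, false_or, not_false_eq_true, and_true]
        split_ifs <;> omega
  rw [h1, Finset.card_image_of_injective _ (hfinj.prodMap hfinj), h2,
    Finset.card_image_of_injOn, Finset.card_powerset]
  intro U hU V hV hUV
  simp only [Finset.mem_coe, Finset.mem_powerset] at hU hV
  have hfst := congrArg Prod.fst hUV
  simp only at hfst
  ext i
  constructor
  · intro hi
    have h1' : i ∈ V ∪ F2 := hfst ▸ Finset.mem_union_left _ hi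
    rcases Finset.mem_union.1 h1' with h | h
    · exact h
    · exfalso
      have := hU hi
      simp [hK, hF2] at this h
      omega
  · intro hi
    have h1' : i ∈ U ∪ F2 := hfst ▸ Finset.mem_union_left _ hi
    rcases Finset.mem_union.1 h1' with h | h
    · exact h
    · exfalso
      have := hV hi
      simp [hK, hF2] at this h
      omega
end

section
/- Under the same properness assumption on B, the additive energy E(A,A) = Σ_{n ∈ ℤ_p} R_n(A)² equals Σ_{j=0}^{m} C(m,j)·2^{m+j} = 2^m · 3^m, and in particular E(A,A) ≤ 2^{3m}. -/
open Finset
open scoped symmDiff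

/-- indicator of a finset, as a natural number -/
def stInd {m : ℕ} (S : Finset (Fin m)) (i : Fin m) : ℕ := if i ∈ S then 1 else 0

lemma stInd_key_iff {m : ℕ} (S T S' T' : Finset (Fin m)) :
    (∀ i, stInd S' i + stInd T' i = stInd S i + stInd T i) ↔
      (S ∩ T ⊆ S' ∧ S' ⊆ S ∪ T ∧ T' = (S ∩ T) ∪ ((S ∪ T) \ S')) := by
  constructor
  · intro h
    refine ⟨?_, ?_, ?_⟩
    · intro i hi
      have hh := h i
      simp only [Finset.mem_inter] at hi
      simp only [stInd, hi.1, hi.2, if_true] at hh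
      by_contra hc
      simp only [hc, if_false] at hh
      split_ifs at hh <;> omega
    · intro i hi
      have hh := h i
      simp only [stInd, hi, if_true] at hh
      by_contra hc
      simp only [Finset.mem_union, not_or] at hc
      simp only [hc.1, hc.2, if_false] at hh
      split_ifs at hh <;> omega
    · ext i
      have hh := h i
      simp only [stInd] at hh
      simp only [Finset.mem_union, Finset.mem_inter, Finset.mem_sdiff]
      by_cases h1 : i ∈ S <;> by_cases h2 : i ∈ T <;> by_cases h3 : i ∈ S' <;>
        by_cases h4 : i ∈ T' <;>
        simp only [h1, h2, h3, h4, if_true, if_false] at hh ⊢ <;>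
        first | rfl | tauto | (exfalso; omega)
  · rintro ⟨h1, h2, rfl⟩ i
    simp only [stInd, Finset.mem_union, Finset.mem_inter, Finset.mem_sdiff]
    have h1' := @h1 i
    have h2' := @h2 i
    simp only [Finset.mem_inter, Finset.mem_union] at h1' h2'
    by_cases ha : i ∈ S <;> by_cases hb : i ∈ T <;> by_cases hc : i ∈ S' <;>
      simp only [ha, hb, hc, if_true, if_false, true_and, false_and, and_true, and_false,
        true_or, or_true, false_or, or_false, not_true, not_false_iff] at * <;>
      first | rfl | tauto | (exfalso; omega) | omega

lemma stInd_card_sol {m : ℕ} (S T : Finset (Fin m)) :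
    (((univ ×ˢ univ : Finset (Finset (Fin m) × Finset (Fin m)))).filter
      (fun q => ∀ i, stInd q.1 i + stInd q.2 i = stInd S i + stInd T i)).card
      = 2 ^ (S ∆ T).card := by
  have hcard : (Finset.Icc (S ∩ T) (S ∪ T)).card = 2 ^ (S ∆ T).card := by
    rw [Finset.card_Icc_finset (Finset.inter_subset_union)]
    congr 1
    have : S ∆ T = (S ∪ T) \ (S ∩ T) := by
      rw [symmDiff_eq_sup_sdiff_inf]; rfl
    rw [this, Finset.card_sdiff_of_subset Finset.inter_subset_union]
  rw [← hcard]
  apply Finset.card_bij' (fun q _ => q.1)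
    (fun S' _ => (S', (S ∩ T) ∪ ((S ∪ T) \ S')))
  · intro q hq
    simp only [Finset.mem_filter] at hq
    obtain ⟨hsub1, hsub2, -⟩ := (stInd_key_iff S T q.1 q.2).mp hq.2
    simp only [Finset.mem_Icc]
    exact ⟨Finset.le_iff_subset.mpr hsub1, Finset.le_iff_subset.mpr hsub2⟩
  · intro S' hS'
    simp only [Finset.mem_Icc, Finset.le_iff_subset] at hS'
    simp only [Finset.mem_filter, Finset.mem_product, Finset.mem_univ, true_and,
      and_true]
    exact (stInd_key_iff S T S' _).mpr ⟨hS'.1, hS'.2, rfl⟩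
  · intro q hq
    simp only [Finset.mem_filter] at hq
    obtain ⟨-, -, h3⟩ := (stInd_key_iff S T q.1 q.2).mp hq.2
    exact Prod.ext rfl h3.symm
  · intro S' _
    rfl

lemma stSum_eq {p m : ℕ} (t : Fin m → ZMod p) (S : Finset (Fin m)) :
    ∑ i : Fin m, (stInd S i : ZMod p) * t i = ∑ i ∈ S, t i := by
  have h : ∀ i : Fin m, (stInd S i : ZMod p) * t i = if i ∈ S then t i else 0 := by
    intro i
    simp only [stInd]
    split_ifs <;> simp
  simp_rw [h]
  rw [Finset.sum_ite_mem, Finset.univ_inter]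

lemma stD {p m : ℕ} (t₀ : ZMod p) (t : Fin m → ZMod p)
    (hB : Function.Injective
      (fun γ : Fin m → Fin 3 => 2 * t₀ + ∑ i, ((γ i : ℕ) : ZMod p) * t i))
    (S T S' T' : Finset (Fin m)) :
    ((t₀ + ∑ i ∈ S', t i) + (t₀ + ∑ i ∈ T', t i)
      = (t₀ + ∑ i ∈ S, t i) + (t₀ + ∑ i ∈ T, t i)) ↔
      ∀ i, stInd S' i + stInd T' i = stInd S i + stInd T i := by
  have hγval : ∀ (S T : Finset (Fin m)) (i : Fin m), stInd S i + stInd T i < 3 := by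
    intro S T i
    simp only [stInd]
    split_ifs <;> omega
  set γ : Finset (Fin m) → Finset (Fin m) → Fin m → Fin 3 :=
    fun S T i => ⟨stInd S i + stInd T i, hγval S T i⟩ with hγ
  have hg : ∀ (S T : Finset (Fin m)),
      (2 * t₀ + ∑ i, ((γ S T i : ℕ) : ZMod p) * t i)
        = (t₀ + ∑ i ∈ S, t i) + (t₀ + ∑ i ∈ T, t i) := by
    intro S T
    have h : ∀ i : Fin m, ((γ S T i : ℕ) : ZMod p) * t i
        = (stInd S i : ZMod p) * t i + (stInd T i : ZMod p) * t i := by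
      intro i
      simp only [hγ]
      push_cast
      ring
    simp_rw [h]
    rw [Finset.sum_add_distrib, stSum_eq, stSum_eq]
    ring
  constructor
  · intro h
    have heq : γ S' T' = γ S T := hB (by simp only; rw [hg, hg, h])
    intro i
    have := congrFun heq i
    simpa [hγ, Fin.ext_iff] using this
  · intro h
    have heq : γ S' T' = γ S T := by
      funext i
      exact Fin.ext (h i)
    rw [← hg, ← hg, heq]

/-- Under the properness assumption on `B`, the additive energy
`E(A,A) = Σ_{n ∈ ℤ_p} R_n(A)²` equals `Σ_{j=0}^m C(m,j)·2^{m+j} = 2^m·3^m`, and in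
particular `E(A,A) ≤ 2^{3m}`. -/
theorem stmt2 (p m : ℕ) [Fact p.Prime] (t₀ : ZMod p) (t : Fin m → ZMod p)
    (hB : Function.Injective
      (fun γ : Fin m → Fin 3 => 2 * t₀ + ∑ i, ((γ i : ℕ) : ZMod p) * t i))
    (A : Finset (ZMod p))
    (hA : A = (Finset.univ : Finset (Finset (Fin m))).image (fun S => t₀ + ∑ i ∈ S, t i))
    (R : ZMod p → ℕ)
    (hR : ∀ n, R n = ((A ×ˢ A).filter (fun ab => ab.1 + ab.2 = n)).card) :
    (∑ n : ZMod p, (R n) ^ 2 = ∑ j ∈ Finset.range (m + 1), Nat.choose m j * 2 ^ (m + j))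
    ∧ (∑ n : ZMod p, (R n) ^ 2 = 2 ^ m * 3 ^ m)
    ∧ (∑ n : ZMod p, (R n) ^ 2 ≤ 2 ^ (3 * m)) := by
  classical
  set f : Finset (Fin m) → ZMod p := fun S => t₀ + ∑ i ∈ S, t i with hf
  have hD : ∀ S T S' T' : Finset (Fin m),
      (f S' + f T' = f S + f T) ↔ ∀ i, stInd S' i + stInd T' i = stInd S i + stInd T i :=
    fun S T S' T' => stD t₀ t hB S T S' T'
  have hfinj : Function.Injective f := by
    intro S S' h
    have h2 : f S + f (∅ : Finset (Fin m)) = f S' + f ∅ := by rw [h]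
    have h3 := (hD S' ∅ S ∅).mp h2
    ext i
    have h4 := h3 i
    simp only [stInd, Finset.notMem_empty, if_false] at h4
    by_cases h1 : i ∈ S <;> by_cases h5 : i ∈ S' <;>
      simp only [h1, h5, if_true, if_false] at h4 ⊢ <;> first | tauto | omega
  have hA' : A = Finset.univ.image f := hA
  -- Step 1: energy as a sum over pairs
  have step1 : ∑ n : ZMod p, R n ^ 2 = ∑ x ∈ A ×ˢ A, R (x.1 + x.2) := by
    have h1 : ∀ n : ZMod p, R n ^ 2
        = ∑ x ∈ (A ×ˢ A).filter (fun ab => ab.1 + ab.2 = n), R (x.1 + x.2) := by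
      intro n
      rw [Finset.sum_congr rfl (fun x hx => by rw [(Finset.mem_filter.mp hx).2]),
        Finset.sum_const, ← hR n, smul_eq_mul, sq]
    rw [Finset.sum_congr rfl (fun n _ => h1 n)]
    exact Finset.sum_fiberwise_of_maps_to (fun x _ => Finset.mem_univ _) _
  -- Step 2: pull back to pairs of subsets
  have hprod : A ×ˢ A = (Finset.univ ×ˢ Finset.univ).image (Prod.map f f) := by
    ext x
    simp only [hA', Finset.mem_product, Finset.mem_image, Finset.mem_univ, true_and,
      Prod.map, Prod.ext_iff]
    constructor
    · rintro ⟨⟨S, hS⟩, ⟨T, hT⟩⟩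
      exact ⟨(S, T), hS, hT⟩
    · rintro ⟨q, hq1, hq2⟩
      exact ⟨⟨q.1, hq1⟩, ⟨q.2, hq2⟩⟩
  have hpinj : Function.Injective (Prod.map f f) := hfinj.prodMap hfinj
  -- Step 3: value of R at a sum
  have hRval : ∀ S T : Finset (Fin m), R (f S + f T) = 2 ^ (S ∆ T).card := by
    intro S T
    rw [hR, ← stInd_card_sol S T, hprod, Finset.filter_image,
      Finset.card_image_of_injective _ hpinj]
    congr 1
    apply Finset.filter_congr
    intro q _
    simpa using hD S T q.1 q.2
  -- Step 4: compute the double sum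
  have c3 : ∑ U : Finset (Fin m), 2 ^ U.card
      = ∑ j ∈ Finset.range (m + 1), Nat.choose m j * 2 ^ j := by
    rw [← Finset.powerset_univ, Finset.sum_powerset_apply_card (fun j => (2 : ℕ) ^ j)]
    simp [Finset.card_univ]
  have step4 : ∑ n : ZMod p, R n ^ 2
      = 2 ^ m * ∑ j ∈ Finset.range (m + 1), Nat.choose m j * 2 ^ j := by
    rw [step1, hprod, Finset.sum_image (fun x _ y _ h => hpinj h)]
    have h2 : ∀ q : Finset (Fin m) × Finset (Fin m),
        R ((Prod.map f f q).1 + (Prod.map f f q).2) = 2 ^ (q.1 ∆ q.2).card :=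
      fun q => hRval q.1 q.2
    rw [Finset.sum_congr rfl (fun q _ => h2 q), Finset.sum_product]
    have h3 : ∀ S : Finset (Fin m), ∑ T : Finset (Fin m), 2 ^ (S ∆ T).card
        = ∑ j ∈ Finset.range (m + 1), Nat.choose m j * 2 ^ j := by
      intro S
      rw [← c3]
      refine (Fintype.sum_bijective (fun U => S ∆ U)
        (Function.Involutive.bijective (fun U => symmDiff_symmDiff_cancel_left S U)) _ _
        (fun U => ?_)).symm
      rw [symmDiff_symmDiff_cancel_left]
    rw [Finset.sum_congr rfl (fun S _ => h3 S), Finset.sum_const, Finset.card_univ,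
      Fintype.card_finset, Fintype.card_fin, smul_eq_mul]
  have hbin : ∑ j ∈ Finset.range (m + 1), Nat.choose m j * 2 ^ j = 3 ^ m := by
    have := add_pow 2 1 m  -- in ℕ
    simp only [one_pow, mul_one] at this
    rw [show (3 : ℕ) = 2 + 1 by norm_num, this]
    apply Finset.sum_congr rfl
    intro j _
    push_cast
    ring
  refine ⟨?_, ?_, ?_⟩
  · rw [step4, Finset.mul_sum]
    apply Finset.sum_congr rfl
    intro j _
    rw [pow_add]
    ring
  · rw [step4, hbin]
  · rw [step4, hbin, pow_mul]
    calc 2 ^ m * 3 ^ m = 6 ^ m := by rw [← mul_pow]; norm_num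
      _ ≤ 8 ^ m := Nat.pow_le_pow_left (by norm_num) m
      _ = (2 ^ 3) ^ m := by norm_num
end

section
/- Let ε > 0, m = ⌈log₂ p − 2 log₂ ε⌉, d = 2^m, and suppose t₀, t₁,...,t_m ∈ ℤ_p are such that B = {2t₀ + Σ n_i t_i : 0 ≤ n_i < 3} is a proper GAP. Then the set A = {t₀ + Σ_{t∈S} t : S ⊆ T}, T = {t₁,...,t_m}, satisfies max_{x≠0} (1/d²)|Σ_{a∈A} e^{2πi a x/p}|² ≤ ε. -/
open Finset Complex

noncomputable def ec (p : ℕ) (y : ZMod p) : ℂ :=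
  Complex.exp (2 * Real.pi * Complex.I * ((y.val : ℕ) : ℂ) / p)

lemma ec_nat (p : ℕ) (hp : p ≠ 0) (n : ℕ) :
    Complex.exp (2 * Real.pi * Complex.I * ((n % p : ℕ) : ℂ) / p)
      = Complex.exp (2 * Real.pi * Complex.I * (n : ℂ) / p) := by
  have h : (n : ℂ) = (p : ℂ) * ((n / p : ℕ) : ℂ) + ((n % p : ℕ) : ℂ) := by
    push_cast [Nat.div_add_mod]
    exact_mod_cast congrArg (fun k : ℕ => (k : ℂ)) (Nat.div_add_mod n p).symm
  have hpc : (p : ℂ) ≠ 0 := Nat.cast_ne_zero.mpr hp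
  rw [h]
  rw [mul_add, add_div, Complex.exp_add]
  have : 2 * (Real.pi : ℂ) * Complex.I * ((p : ℂ) * ((n / p : ℕ) : ℂ)) / p
      = ((n / p : ℕ) : ℂ) * (2 * Real.pi * Complex.I) := by
    field_simp
  rw [this, Complex.exp_nat_mul, Complex.exp_two_pi_mul_I, one_pow, one_mul]

lemma ec_zero (p : ℕ) : ec p 0 = 1 := by
  simp [ec]

lemma ec_add (p : ℕ) [NeZero p] (a b : ZMod p) : ec p (a + b) = ec p a * ec p b := by
  have hp : p ≠ 0 := NeZero.ne p
  unfold ec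
  rw [ZMod.val_add, ec_nat p hp, ← Complex.exp_add]
  congr 1
  push_cast
  ring

lemma ec_ne_zero (p : ℕ) (y : ZMod p) : ec p y ≠ 0 := Complex.exp_ne_zero _

lemma ec_neg (p : ℕ) [NeZero p] (y : ZMod p) : ec p (-y) = (starRingEnd ℂ) (ec p y) := by
  have h1 : ec p y * ec p (-y) = 1 := by
    rw [← ec_add, add_neg_cancel, ec_zero]
  have h2 : ec p y * (starRingEnd ℂ) (ec p y) = 1 := by
    rw [Complex.mul_conj]
    norm_cast
    unfold ec
    rw [Complex.normSq_eq_norm_sq, Complex.norm_exp]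
    have harg : (2 * (Real.pi:ℂ) * Complex.I * ((y.val : ℕ) : ℂ) / p)
        = ((2 * Real.pi * (y.val : ℝ) / p : ℝ) : ℂ) * Complex.I := by
      push_cast; ring
    rw [harg]
    simp
  exact mul_left_cancel₀ (ec_ne_zero p y) (h1.trans h2.symm)

lemma ec_ne_one (p : ℕ) [Fact p.Prime] (y : ZMod p) (hy : y ≠ 0) : ec p y ≠ 1 := by
  intro h
  unfold ec at h
  rw [Complex.exp_eq_one_iff] at h
  obtain ⟨n, hn⟩ := h
  have hp : (p : ℂ) ≠ 0 := Nat.cast_ne_zero.mpr (Fact.out : p.Prime).ne_zero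
  have h2 : (2 * (Real.pi:ℂ) * Complex.I) ≠ 0 := by
    simp [Real.pi_ne_zero, Complex.I_ne_zero]
  have hv : ((y.val : ℕ) : ℂ) = n * p := by
    have hn' := (div_eq_iff hp).mp hn
    have h3 : (2 * (Real.pi:ℂ) * Complex.I) * ((y.val : ℕ) : ℂ)
        = (2 * (Real.pi:ℂ) * Complex.I) * ((n : ℂ) * p) := by
      linear_combination hn'
    exact mul_left_cancel₀ h2 h3
  have hvr : ((y.val : ℕ) : ℝ) = (n : ℝ) * p := by
    exact_mod_cast congrArg Complex.re hv
  have h0 : 0 < y.val := Nat.pos_of_ne_zero (by simpa [ZMod.val_eq_zero] using hy)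
  have hlt : y.val < p := ZMod.val_lt y
  have hppos : (0:ℝ) < p := by exact_mod_cast (Fact.out : p.Prime).pos
  have hn0 : (0:ℝ) < (n:ℝ) := by
    by_contra hc
    push_neg at hc
    nlinarith [hvr, (by exact_mod_cast h0 : (0:ℝ) < (y.val:ℝ))]
  have hn1 : (n:ℝ) < 1 := by
    by_contra hc
    push_neg at hc
    nlinarith [hvr, (by exact_mod_cast hlt : ((y.val:ℕ):ℝ) < (p:ℝ))]
  have : (0:ℤ) < n := by exact_mod_cast hn0
  have : (n:ℤ) < 1 := by exact_mod_cast hn1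
  omega

lemma sum_ec (p : ℕ) [Fact p.Prime] (y : ZMod p) :
    ∑ x : ZMod p, ec p (y * x) = if y = 0 then (p : ℂ) else 0 := by
  by_cases hy : y = 0
  · simp [hy, ec_zero, ZMod.card]
  · rw [if_neg hy]
    have key : (∑ x : ZMod p, ec p (y * x)) * ec p y = ∑ x : ZMod p, ec p (y * x) := by
      rw [Finset.sum_mul]
      rw [← Equiv.sum_comp (Equiv.addRight (1 : ZMod p)) (fun x => ec p (y * x))]
      apply Finset.sum_congr rfl
      intro x _
      simp only [Equiv.coe_addRight]
      rw [mul_add, mul_one, ec_add]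
    have := sub_eq_zero.mpr key
    have h2 : (∑ x : ZMod p, ec p (y * x)) * (ec p y - 1) = 0 := by
      rw [mul_sub, mul_one]; exact this
    rcases mul_eq_zero.mp h2 with h | h
    · exact h
    · exact absurd (sub_eq_zero.mp h) (ec_ne_one p y hy)

/-- Let `ε > 0`, `m = ⌈log₂ p − 2 log₂ ε⌉`, `d = 2^m`, and suppose
`t₀, t₁, …, t_m ∈ ℤ_p` are such that `B = {2t₀ + Σ nᵢtᵢ : 0 ≤ nᵢ < 3}` is a proper GAP.
Then `A = {t₀ + Σ_{t∈S} t : S ⊆ T}` satisfies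
`max_{x ≠ 0} (1/d²)|Σ_{a∈A} e^{2πi a x/p}|² ≤ ε`. -/
theorem stmt8 (p : ℕ) [Fact p.Prime] (ε : ℝ) (hε : 0 < ε) (m : ℕ)
    (hm : m = ⌈Real.logb 2 p - 2 * Real.logb 2 ε⌉₊) (d : ℕ) (hd : d = 2 ^ m)
    (t₀ : ZMod p) (t : Fin m → ZMod p)
    (hB : Function.Injective
      (fun γ : Fin m → Fin 3 => 2 * t₀ + ∑ i, ((γ i : ℕ) : ZMod p) * t i))
    (A : Finset (ZMod p))
    (hA : A = (Finset.univ : Finset (Finset (Fin m))).image (fun S => t₀ + ∑ i ∈ S, t i)) :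
    ∀ x : ZMod p, x ≠ 0 →
      (1 / (d : ℝ) ^ 2) *
        ‖∑ a ∈ A, Complex.exp (2 * Real.pi * Complex.I * ((a * x).val : ℕ) / p)‖ ^ 2
      ≤ ε := by
  haveI : NeZero p := ⟨(Fact.out : p.Prime).ne_zero⟩
  intro x hx
  -- the exponential sum
  set S : ZMod p → ℂ := fun x' => ∑ a ∈ A, ec p (a * x') with hS
  have hgoal : (∑ a ∈ A, Complex.exp (2 * Real.pi * Complex.I * ((a * x).val : ℕ) / p)) = S x := rfl
  rw [hgoal]
  -- the energy set
  set Q : Finset ((ZMod p × ZMod p) × (ZMod p × ZMod p)) :=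
    ((A ×ˢ A) ×ˢ (A ×ˢ A)).filter (fun q => q.1.1 + q.1.2 = q.2.1 + q.2.2) with hQ
  -- square expansion
  have hS2 : ∀ x' : ZMod p, (S x') ^ 2 = ∑ q ∈ A ×ˢ A, ec p ((q.1 + q.2) * x') := by
    intro x'
    rw [hS, sq, Finset.sum_mul_sum, Finset.sum_product]
    refine Finset.sum_congr rfl fun a _ => Finset.sum_congr rfl fun b _ => ?_
    rw [← ec_add, ← add_mul]
  have hconj : ∀ x' : ZMod p, (starRingEnd ℂ) ((S x') ^ 2)
      = ∑ r ∈ A ×ˢ A, ec p (-((r.1 + r.2) * x')) := by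
    intro x'
    rw [hS2, map_sum]
    exact Finset.sum_congr rfl fun r _ => (ec_neg p _).symm
  -- fourth moment identity
  have keyC : ∑ x' : ZMod p, (S x') ^ 2 * (starRingEnd ℂ) ((S x') ^ 2)
      = (p : ℂ) * Q.card := by
    have step1 : ∀ x' : ZMod p, (S x') ^ 2 * (starRingEnd ℂ) ((S x') ^ 2)
        = ∑ q ∈ A ×ˢ A, ∑ r ∈ A ×ˢ A, ec p (((q.1 + q.2) - (r.1 + r.2)) * x') := by
      intro x'
      rw [hconj, hS2, Finset.sum_mul_sum]
      refine Finset.sum_congr rfl fun q _ => Finset.sum_congr rfl fun r _ => ?_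
      rw [← ec_add]
      congr 1
      ring
    calc ∑ x' : ZMod p, (S x') ^ 2 * (starRingEnd ℂ) ((S x') ^ 2)
        = ∑ x' : ZMod p, ∑ q ∈ A ×ˢ A, ∑ r ∈ A ×ˢ A,
            ec p (((q.1 + q.2) - (r.1 + r.2)) * x') := by
          exact Finset.sum_congr rfl fun x' _ => step1 x'
      _ = ∑ q ∈ A ×ˢ A, ∑ r ∈ A ×ˢ A, ∑ x' : ZMod p,
            ec p (((q.1 + q.2) - (r.1 + r.2)) * x') := by
          rw [Finset.sum_comm]
          exact Finset.sum_congr rfl fun q _ => Finset.sum_comm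
      _ = ∑ q ∈ A ×ˢ A, ∑ r ∈ A ×ˢ A,
            (if q.1 + q.2 = r.1 + r.2 then (p : ℂ) else 0) := by
          refine Finset.sum_congr rfl fun q _ => Finset.sum_congr rfl fun r _ => ?_
          rw [sum_ec]
          congr 1
          simp [sub_eq_zero]
      _ = (p : ℂ) * Q.card := by
          have hh : (p : ℂ) * ((((A ×ˢ A) ×ˢ (A ×ˢ A)).filter
              (fun q => q.1.1 + q.1.2 = q.2.1 + q.2.2)).card : ℂ)
              = ∑ q ∈ A ×ˢ A, ∑ r ∈ A ×ˢ A,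
                  (if q.1 + q.2 = r.1 + r.2 then (p : ℂ) else 0) :=
            calc (p : ℂ) * ((((A ×ˢ A) ×ˢ (A ×ˢ A)).filter
                (fun q => q.1.1 + q.1.2 = q.2.1 + q.2.2)).card : ℂ)
                = ∑ qr ∈ ((A ×ˢ A) ×ˢ (A ×ˢ A)).filter
                    (fun q => q.1.1 + q.1.2 = q.2.1 + q.2.2), (p : ℂ) := by
                  rw [Finset.sum_const, nsmul_eq_mul, mul_comm]
              _ = ∑ qr ∈ (A ×ˢ A) ×ˢ (A ×ˢ A),
                    (if qr.1.1 + qr.1.2 = qr.2.1 + qr.2.2 then (p : ℂ) else 0) :=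
                  Finset.sum_filter _ _
              _ = ∑ q ∈ A ×ˢ A, ∑ r ∈ A ×ˢ A,
                    (if q.1 + q.2 = r.1 + r.2 then (p : ℂ) else 0) :=
                  Finset.sum_product _ _ _
          rw [hQ, hh]
  -- the real fourth moment
  have habs : ∀ x' : ZMod p, ((‖S x'‖ : ℝ) : ℂ) ^ 4
      = (S x') ^ 2 * (starRingEnd ℂ) ((S x') ^ 2) := by
    intro x'
    have : ((S x') * (starRingEnd ℂ) (S x')) = ((‖S x'‖ ^ 2 : ℝ) : ℂ) := by
      rw [Complex.mul_conj]
      norm_cast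
      rw [Complex.sq_norm]
    calc ((‖S x'‖ : ℝ) : ℂ) ^ 4
        = (((‖S x'‖ ^ 2 : ℝ) : ℂ)) ^ 2 := by push_cast; ring
      _ = ((S x') * (starRingEnd ℂ) (S x')) ^ 2 := by rw [this]
      _ = (S x') ^ 2 * (starRingEnd ℂ) ((S x') ^ 2) := by rw [map_pow]; ring
  have keyR : ∑ x' : ZMod p, (‖S x'‖) ^ 4 = (p : ℝ) * Q.card := by
    have : ((∑ x' : ZMod p, (‖S x'‖) ^ 4 : ℝ) : ℂ) = ((p : ℝ) * Q.card : ℂ) := by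
      push_cast
      rw [show ∑ x' : ZMod p, ((‖S x'‖ : ℂ)) ^ 4
          = ∑ x' : ZMod p, (S x') ^ 2 * (starRingEnd ℂ) ((S x') ^ 2) from
        Finset.sum_congr rfl fun x' _ => habs x']
      rw [keyC]
    exact_mod_cast this
  -- pointwise bound from the moment
  have hpt : (‖S x‖) ^ 4 ≤ (p : ℝ) * Q.card := by
    rw [← keyR]
    exact Finset.single_le_sum (f := fun x' => ‖S x'‖ ^ 4)
      (fun i _ => by positivity) (Finset.mem_univ x)
  -- cardinality bounds
  have hAcard : A.card ≤ d := by
    rw [hA, hd]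
    calc ((Finset.univ : Finset (Finset (Fin m))).image _).card
        ≤ (Finset.univ : Finset (Finset (Fin m))).card := Finset.card_image_le
      _ = 2 ^ m := by rw [Finset.card_univ, Fintype.card_finset, Fintype.card_fin]
  have hQcard : Q.card ≤ d ^ 3 := by
    have h1 : Q.card ≤ ((A ×ˢ A) ×ˢ A).card := by
      apply Finset.card_le_card_of_injOn (fun q => (q.1, q.2.1))
      · intro q hq
        simp only [hQ, Finset.mem_coe, Finset.mem_filter, Finset.mem_product] at hq
        exact Finset.mem_product.mpr ⟨Finset.mem_product.mpr hq.1.1, hq.1.2.1⟩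
      · intro q hq q' hq' h
        simp only [hQ, Finset.coe_filter, Set.mem_setOf_eq] at hq hq'
        have h0 : (q.1, q.2.1) = (q'.1, q'.2.1) := h
        have e1 : q.1 = q'.1 := congrArg (fun z => z.1) h0
        have e2 : q.2.1 = q'.2.1 := congrArg (fun z => z.2) h0
        have e3 : q.2.2 = q'.2.2 := by
          have hc := hq.2
          have hc' := hq'.2
          have hh : q.2.2 = q.1.1 + q.1.2 - q.2.1 := by rw [hc]; ring
          have h' : q'.2.2 = q'.1.1 + q'.1.2 - q'.2.1 := by rw [hc']; ring
          rw [hh, h', e1, e2]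
        exact Prod.ext e1 (Prod.ext e2 e3)
    have h2 : ((A ×ˢ A) ×ˢ A).card = A.card ^ 3 := by
      rw [Finset.card_product, Finset.card_product]; ring
    exact le_trans h1 (le_trans (le_of_eq h2) (Nat.pow_le_pow_left hAcard 3))
  -- arithmetic: p ≤ ε² d
  have hppos : (0 : ℝ) < p := by exact_mod_cast (Fact.out : p.Prime).pos
  have hdpos : (0 : ℝ) < d := by
    rw [hd]; positivity
  have hpd : (p : ℝ) ≤ ε ^ 2 * d := by
    have hratpos : (0 : ℝ) < (p : ℝ) / ε ^ 2 := by positivity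
    have hlogb : Real.logb 2 ((p : ℝ) / ε ^ 2)
        = Real.logb 2 p - 2 * Real.logb 2 ε := by
      rw [Real.logb_div (ne_of_gt hppos) (by positivity)]
      congr 1
      rw [Real.logb, Real.logb, Real.log_pow]
      push_cast
      ring
    have hle : Real.logb 2 ((p : ℝ) / ε ^ 2) ≤ (m : ℝ) := by
      rw [hlogb, hm]
      exact Nat.le_ceil _
    have : (p : ℝ) / ε ^ 2 ≤ (d : ℝ) := by
      calc (p : ℝ) / ε ^ 2 = (2 : ℝ) ^ (Real.logb 2 ((p : ℝ) / ε ^ 2)) :=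
            (Real.rpow_logb (by norm_num) (by norm_num) hratpos).symm
        _ ≤ (2 : ℝ) ^ ((m : ℝ)) :=
            Real.rpow_le_rpow_of_exponent_le (by norm_num) hle
        _ = (d : ℝ) := by
            rw [Real.rpow_natCast, hd]; push_cast; ring
    calc (p : ℝ) = ((p : ℝ) / ε ^ 2) * ε ^ 2 := by field_simp
      _ ≤ (d : ℝ) * ε ^ 2 := by
          apply mul_le_mul_of_nonneg_right this (by positivity)
      _ = ε ^ 2 * d := by ring
  -- finish
  set X : ℝ := ‖S x‖ with hX
  have hXnn : 0 ≤ X := norm_nonneg _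
  have h4 : X ^ 4 ≤ ε ^ 2 * (d : ℝ) ^ 4 := by
    have hq : (Q.card : ℝ) ≤ (d : ℝ) ^ 3 := by exact_mod_cast hQcard
    calc X ^ 4 ≤ (p : ℝ) * Q.card := hpt
      _ ≤ (ε ^ 2 * d) * (d : ℝ) ^ 3 := by
          apply mul_le_mul hpd hq (by positivity) (by positivity)
      _ = ε ^ 2 * (d : ℝ) ^ 4 := by ring
  have h2 : X ^ 2 ≤ ε * (d : ℝ) ^ 2 := by
    have hsq : (X ^ 2) ^ 2 ≤ (ε * (d : ℝ) ^ 2) ^ 2 := by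
      calc (X ^ 2) ^ 2 = X ^ 4 := by ring
        _ ≤ ε ^ 2 * (d : ℝ) ^ 4 := h4
        _ = (ε * (d : ℝ) ^ 2) ^ 2 := by ring
    have := Real.sqrt_le_sqrt hsq
    rwa [Real.sqrt_sq (by positivity), Real.sqrt_sq (by positivity)] at this
  have hd2 : (0 : ℝ) < (d : ℝ) ^ 2 := by positivity
  rw [show (1 / (d : ℝ) ^ 2) * X ^ 2 = X ^ 2 / (d : ℝ) ^ 2 by ring,
    div_le_iff₀ hd2]
  linarith [h2]
end

section
/- Let m ≥ 1 and let A be the set of subset sums of T = {t₁,...,t_m} (shifted by t₀) in ℤ_p with the properness assumption on B. Then for every n ∈ ℤ_p, R_n(A) ∈ {0} ∪ {2^j : 0 ≤ j ≤ m}, i.e., the number of representations of any n as a+b with a,b ∈ A is either 0 or a power of 2 at most 2^m. -/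
open Finset

private def gam {m : ℕ} (S S' : Finset (Fin m)) (i : Fin m) : Fin 3 :=
  if i ∈ S then (if i ∈ S' then 2 else 1) else (if i ∈ S' then 1 else 0)

private lemma fin3_cases (x : Fin 3) : x = 0 ∨ x = 1 ∨ x = 2 := by revert x; decide

set_option maxHeartbeats 1000000

/-- With the properness assumption on `B`, for every `n ∈ ℤ_p` the number of
representations `R_n(A)` of `n` as `a + b` with `a, b ∈ A` is either `0` or a power of `2`
at most `2^m`. -/
theorem stmt16 (p m : ℕ) [Fact p.Prime] (hm : 1 ≤ m) (t₀ : ZMod p) (t : Fin m → ZMod p)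
    (hB : Function.Injective
      (fun γ : Fin m → Fin 3 => 2 * t₀ + ∑ i, ((γ i : ℕ) : ZMod p) * t i))
    (A : Finset (ZMod p))
    (hA : A = (Finset.univ : Finset (Finset (Fin m))).image (fun S => t₀ + ∑ i ∈ S, t i)) :
    ∀ n : ZMod p,
      ((A ×ˢ A).filter (fun ab => ab.1 + ab.2 = n)).card = 0
      ∨ ∃ j ≤ m, ((A ×ˢ A).filter (fun ab => ab.1 + ab.2 = n)).card = 2 ^ j := by
  intro n
  set f : Finset (Fin m) → ZMod p := fun S => t₀ + ∑ i ∈ S, t i with hf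
  have key : ∀ S S' : Finset (Fin m),
      f S + f S' = 2 * t₀ + ∑ i, ((gam S S' i : ℕ) : ZMod p) * t i := by
    intro S S'
    have h1 : ∀ U : Finset (Fin m), ∑ i ∈ U, t i = ∑ i, (if i ∈ U then t i else 0) := by
      intro U
      rw [Finset.sum_ite_mem, Finset.univ_inter]
    have h2 : ∀ i : Fin m, (if i ∈ S then t i else 0) + (if i ∈ S' then t i else 0)
        = ((gam S S' i : ℕ) : ZMod p) * t i := by
      intro i
      unfold gam
      split_ifs <;> norm_num <;> ring
    have h3 : (t₀ + ∑ i, (if i ∈ S then t i else 0)) + (t₀ + ∑ i, (if i ∈ S' then t i else 0))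
        = 2 * t₀ + ∑ i, ((if i ∈ S then t i else 0) + (if i ∈ S' then t i else 0)) := by
      rw [Finset.sum_add_distrib]; ring
    simp only [hf, h1]
    rw [h3, Finset.sum_congr rfl (fun i _ => h2 i)]
  have hf_inj : Function.Injective f := by
    intro S S' h
    have h1 : gam S S = gam S' S' := by
      apply hB
      simp only
      rw [← key, ← key, h]
    ext i
    have h2 := congrFun h1 i
    unfold gam at h2
    by_cases hS : i ∈ S <;> by_cases hS' : i ∈ S' <;> simp_all
  set P := ((Finset.univ ×ˢ Finset.univ : Finset (Finset (Fin m) × Finset (Fin m)))).filter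
      (fun SS' => f SS'.1 + f SS'.2 = n) with hP
  have hcard : ((A ×ˢ A).filter (fun ab => ab.1 + ab.2 = n)).card = P.card := by
    symm
    apply Finset.card_bij (fun SS' _ => (f SS'.1, f SS'.2))
    · intro SS' hSS'
      simp only [hP, Finset.mem_filter] at hSS'
      simp only [Finset.mem_filter, Finset.mem_product, hA, Finset.mem_image]
      exact ⟨⟨⟨SS'.1, Finset.mem_univ _, rfl⟩, ⟨SS'.2, Finset.mem_univ _, rfl⟩⟩, hSS'.2⟩
    · intro a ha b hb hab
      have h1 := congrArg Prod.fst hab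
      have h2 := congrArg Prod.snd hab
      simp only at h1 h2
      exact Prod.ext (hf_inj h1) (hf_inj h2)
    · intro ab hab
      simp only [Finset.mem_filter, Finset.mem_product, hA, Finset.mem_image] at hab
      obtain ⟨⟨⟨S, _, hS⟩, ⟨S', _, hS'⟩⟩, hsum⟩ := hab
      refine ⟨(S, S'), ?_, ?_⟩
      · simp only [hP, Finset.mem_filter, Finset.mem_product]
        exact ⟨⟨Finset.mem_univ _, Finset.mem_univ _⟩, by simp [hS, hS', hsum]⟩
      · simp [hS, hS']
  rw [hcard]
  rcases Finset.eq_empty_or_nonempty P with hPe | ⟨⟨S₀, T₀⟩, hmem⟩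
  · left; simp [hPe]
  · right
    set c : Fin m → Fin 3 := gam S₀ T₀ with hc
    have hn : n = 2 * t₀ + ∑ i, ((c i : ℕ) : ZMod p) * t i := by
      simp only [hP, Finset.mem_filter] at hmem
      rw [← hmem.2, key]
    have hPeq : P = ((Finset.univ ×ˢ Finset.univ :
        Finset (Finset (Fin m) × Finset (Fin m)))).filter
        (fun SS' => gam SS'.1 SS'.2 = c) := by
      ext SS'
      simp only [hP, Finset.mem_filter, Finset.mem_product, Finset.mem_univ, true_and]
      constructor
      · intro h
        apply hB
        simp only
        rw [← key, h, hn]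
      · intro h
        rw [key, h, hn]
    set D := Finset.univ.filter (fun i => c i = 1) with hD
    set E := Finset.univ.filter (fun i => c i = 2) with hE
    refine ⟨D.card, ?_, ?_⟩
    · calc D.card ≤ (Finset.univ : Finset (Fin m)).card := Finset.card_filter_le _ _
        _ = m := by simp
    · rw [hPeq, ← Finset.card_powerset]
      apply Finset.card_bij (fun SS' _ => SS'.1 ∩ D)
      · intro SS' _
        simp only [Finset.mem_powerset]
        exact Finset.inter_subset_right
      · intro a ha b hb hab
        simp only [Finset.mem_filter] at ha hb
        have hga := ha.2
        have hgb := hb.2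
        have hiD : ∀ i : Fin m, (i ∈ a.1 ∧ c i = 1) ↔ (i ∈ b.1 ∧ c i = 1) := by
          intro i
          have h := Finset.ext_iff.mp hab i
          simpa [hD, Finset.mem_inter, Finset.mem_filter] using h
        have e1 : a.1 = b.1 := by
          ext i
          have ha' := congrFun hga i
          have hb' := congrFun hgb i
          have hd := hiD i
          clear hP hcard hPeq hn key hB hA hf_inj hab hga hgb hiD ha hb hmem
          unfold gam at ha' hb'
          rcases fin3_cases (c i) with hci | hci | hci <;> rw [hci] at ha' hb' hd <;>
            by_cases h1 : i ∈ a.1 <;> by_cases h2 : i ∈ a.2 <;>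
            by_cases h3 : i ∈ b.1 <;> by_cases h4 : i ∈ b.2 <;> simp_all
        have e2 : a.2 = b.2 := by
          ext i
          have ha' := congrFun hga i
          have hb' := congrFun hgb i
          have hd := hiD i
          clear hP hcard hPeq hn key hB hA hf_inj hab hga hgb hiD ha hb hmem
          unfold gam at ha' hb'
          rcases fin3_cases (c i) with hci | hci | hci <;> rw [hci] at ha' hb' hd <;>
            by_cases h1 : i ∈ a.1 <;> by_cases h2 : i ∈ a.2 <;>
            by_cases h3 : i ∈ b.1 <;> by_cases h4 : i ∈ b.2 <;> simp_all
        exact Prod.ext e1 e2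
      · intro W hW
        simp only [Finset.mem_powerset] at hW
        refine ⟨(W ∪ E, (D \ W) ∪ E), ?_, ?_⟩
        · simp only [Finset.mem_filter, Finset.mem_product, Finset.mem_univ, true_and,
            and_self]
          funext i
          have hWD : i ∈ W → c i = 1 := fun h => by
            have := hW h; simp only [hD, Finset.mem_filter] at this; exact this.2
          unfold gam
          rcases fin3_cases (c i) with h0 | h1 | h2
          · have hw : i ∉ W := fun h => by simp [hWD h] at h0
            have hd : i ∉ D := by simp [hD, h0]
            have he : i ∉ E := by simp [hE, h0]
            simp [hw, hd, he, h0]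
          · have he : i ∉ E := by simp [hE, h1]
            have hd : i ∈ D := by simp [hD, h1]
            by_cases hw : i ∈ W <;> simp [hw, hd, he, h1]
          · have he : i ∈ E := by simp [hE, h2]
            simp [he, h2]
        · ext i
          simp only [Finset.mem_inter, Finset.mem_union, hE, hD, Finset.mem_filter,
            Finset.mem_univ, true_and]
          constructor
          · rintro ⟨hw | he, hd⟩
            · exact hw
            · simp [he] at hd
          · intro hw
            have := hW hw
            simp only [hD, Finset.mem_filter, Finset.mem_univ, true_and] at this
            exact ⟨Or.inl hw, this⟩
end
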